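/- Let 𝔪 be a non-degenerate graded nilpotent Lie algebra, d a degree-preserving derivation with d(𝔪_{-i}) = 0 for i ≥ 2 and rank d = 1, and let y = d(x) span the image of d for some x ∈ 𝔪_{-1}. Then [y, ker d ∩ 𝔪_{-1}] = 0 and [x, y] ≠ 0. -/
import Mathlib


open Module LinearMap

/-- if `d` is a degree-preserving rank-1 derivation of a
non-degenerate GNLA vanishing on `𝔪_{-i}`, `i ≥ 2`, and `y = d x ≠ 0` spans
the image of `d` for some `x ∈ 𝔪_{-1}`, then `⁅y, ker d ∩ 𝔪_{-1}⁆ = 0` and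
`⁅x, y⁆ ≠ 0`. -/
theorem stmt5 {k L : Type*} [Field k] [CharZero k] [LieRing L] [LieAlgebra k L]
    (m : ℕ → Submodule k L)
    (hsum : DirectSum.IsInternal fun i => m i)
    (h0 : m 0 = ⊥)
    (μ : ℕ) (hdepth : ∀ i, μ < i → m i = ⊥)
    (hbr : ∀ i j, ∀ x ∈ m i, ∀ y ∈ m j, ⁅x, y⁆ ∈ m (i + j))
    (hgen : ∀ i, 1 ≤ i →
      m (i + 1) = Submodule.span k {z | ∃ u ∈ m 1, ∃ v ∈ m i, ⁅u, v⁆ = z})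
    (hnd : ∀ y ∈ m 1, (∀ z : L, ⁅y, z⁆ = 0) → y = 0)
    (d : L →ₗ[k] L)
    (hder : ∀ a b : L, d ⁅a, b⁆ = ⁅d a, b⁆ + ⁅a, d b⁆)
    (hpres : ∀ i, ∀ z ∈ m i, d z ∈ m i)
    (hvan : ∀ i, 2 ≤ i → ∀ z ∈ m i, d z = 0)
    (hrk : finrank k (LinearMap.range d) = 1)
    (x y : L) (hx : x ∈ m 1) (hdx : d x = y) (hy : y ≠ 0) :
    (∀ w ∈ m 1, d w = 0 → ⁅y, w⁆ = 0) ∧ ⁅x, y⁆ ≠ 0 := by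

  have hy1 : y ∈ m 1 := hdx ▸ hpres 1 x hx
  have part1 : ∀ w ∈ m 1, d w = 0 → ⁅y, w⁆ = 0 := by
    intro w hw hdw
    have h2 : d ⁅x, w⁆ = 0 := hvan 2 le_rfl _ (hbr 1 1 x hx w hw)
    have h3 := hder x w
    rw [h2, hdx, hdw, lie_zero, add_zero] at h3
    exact h3.symm
  refine ⟨part1, ?_⟩
  intro hxy
  have hyr : y ∈ LinearMap.range d := ⟨x, hdx⟩
  have hmul : ∀ z : L, ∃ c : k, d z = c • y := by
    intro z
    have hnz : (⟨y, hyr⟩ : LinearMap.range d) ≠ 0 := by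
      simp [Submodule.mk_eq_zero, hy]
    obtain ⟨c, hc⟩ := (finrank_eq_one_iff_of_nonzero' (⟨y, hyr⟩ : LinearMap.range d)
      hnz).mp hrk ⟨d z, ⟨z, rfl⟩⟩
    exact ⟨c, by simpa using congrArg Subtype.val hc.symm⟩
  have hm1 : ∀ z ∈ m 1, ⁅y, z⁆ = 0 := by
    intro z hz
    obtain ⟨c, hc⟩ := hmul z
    have hd0 : d (z - c • x) = 0 := by simp [map_sub, hc, hdx]
    have hmem : z - c • x ∈ m 1 := sub_mem hz (Submodule.smul_mem _ _ hx)
    have h1 := part1 _ hmem hd0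
    have hyx : ⁅y, x⁆ = 0 := by rw [← lie_skew, hxy, neg_zero]
    have h2 : ⁅y, z⁆ - c • ⁅y, x⁆ = 0 := by
      simpa [lie_sub, lie_smul] using h1
    rw [hyx, smul_zero, sub_zero] at h2
    exact h2
  have hall : ∀ i, ∀ z ∈ m i, ⁅y, z⁆ = 0 := by
    intro i
    induction i with
    | zero => intro z hz; rw [h0, Submodule.mem_bot] at hz; simp [hz]
    | succ n ih =>
      rcases Nat.eq_zero_or_pos n with h | h
      · subst h; exact hm1
      · intro z hz
        rw [hgen n h] at hz
        induction hz using Submodule.span_induction with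
        | mem w hw =>
          obtain ⟨u, hu, v, hv, rfl⟩ := hw
          rw [leibniz_lie, hm1 u hu, ih v hv, zero_lie, lie_zero, add_zero]
        | zero => exact lie_zero y
        | add a b _ _ ha hb => rw [lie_add, ha, hb, add_zero]
        | smul c a _ ha => rw [lie_smul, ha, smul_zero]
  have hcentral : ∀ z : L, ⁅y, z⁆ = 0 := by
    intro z
    have htop : (⨆ i, m i) = ⊤ := hsum.submodule_iSup_eq_top
    have hz : z ∈ (⨆ i, m i) := htop ▸ Submodule.mem_top
    have hle : (⨆ i, m i) ≤ LinearMap.ker (LieAlgebra.ad k L y) := by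
      apply iSup_le
      intro i w hw
      simpa using hall i w hw
    simpa using hle hz
  exact hy (hnd y hy1 hcentral)
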